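/- Let w = v_1 v_2 ... v_n be a word in n distinct variables and define ψ_w = 1/((x_{v_1}-x_{v_2})(x_{v_2}-x_{v_3})...(x_{v_{n-1}}-x_{v_n})). Then the sum of ψ_w over all n! permutations w of {1,...,n} equals 0 for n ≥ 2. -/

import Mathlib

open scoped BigOperators

/-- The field of rational functions in variables indexed by `V` over `ℚ`. -/
abbrev K (V : Type) : Type := FractionRing (MvPolynomial V ℚ)

/-- The variable `x_v` seen inside the field of rational functions. -/
noncomputable def xv {V : Type} (v : V) : K V :=
  algebraMap (MvPolynomial V ℚ) (K V) (MvPolynomial.X v)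

/-- `ψ_w = 1 / ∏ (x_{w_i} - x_{w_{i+1}})` for a word `w`. -/
noncomputable def psi {V : Type} (w : List V) : K V :=
  (((w.zip w.tail).map fun p => xv p.1 - xv p.2).prod)⁻¹

/-- The word (list of vertices) associated to an enumeration `σ` of the vertex set `W`. -/
def wordOf {V : Type} (W : Finset V) (σ : Fin W.card ≃ W) : List V :=
  (List.finRange W.card).map fun i => ((σ i : W) : V)

/-- `σ` enumerates `W` in an order compatible with all edges of `E`:
the origin of every edge appears before its end. -/
def IsExt {V : Type} (W : Finset V) (E : Finset (V × V)) (σ : Fin W.card ≃ W) : Prop :=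
  ∀ e ∈ E, ∃ i j : Fin W.card, i < j ∧ ((σ i : W) : V) = e.1 ∧ ((σ j : W) : V) = e.2

instance {V : Type} [DecidableEq V] (W : Finset V) (E : Finset (V × V)) (σ : Fin W.card ≃ W) :
    Decidable (IsExt W E σ) := by unfold IsExt; exact inferInstance

/-- `Ψ(G) = Σ_{w ∈ L(G)} ψ_w`, the sum over linear extensions of the graph with
vertex set `W` and edge set `E`. -/
noncomputable def PsiG {V : Type} [DecidableEq V] (W : Finset V) (E : Finset (V × V)) : K V :=
  ∑ σ : Fin W.card ≃ W, if IsExt W E σ then psi (wordOf W σ) else 0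

/-- `N(G) = Ψ(G) ⬝ ∏_{(a,b) ∈ E} (x_a - x_b)`. -/
noncomputable def NG {V : Type} [DecidableEq V] (W : Finset V) (E : Finset (V × V)) : K V :=
  PsiG W E * ∏ e ∈ E, (xv e.1 - xv e.2)

/-- `φ(G)`, the formal sum of the linear extensions of `G` in the free abelian
group on words. -/
noncomputable def phiG {V : Type} [DecidableEq V] (W : Finset V) (E : Finset (V × V)) :
    List V →₀ ℤ :=
  ∑ σ : Fin W.card ≃ W, if IsExt W E σ then Finsupp.single (wordOf W σ) 1 else 0

/-- The graph has no directed circuit. -/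
def Acyclic {V : Type} (E : Finset (V × V)) : Prop :=
  ∀ v : V, ¬ Relation.TransGen (fun a b => (a, b) ∈ E) v v

/-- The underlying undirected simple graph of the directed graph with edge set `E`. -/
def undirected {V : Type} (E : Finset (V × V)) : SimpleGraph V :=
  SimpleGraph.fromRel fun a b => (a, b) ∈ E

/-- The cyclically-consecutive pairs of a list of vertices. -/
def cyclePairs {V : Type} [DecidableEq V] (vs : List V) : Finset (V × V) :=
  Finset.image (fun i : Fin vs.length => (vs.get i, vs.get (finRotate _ i))) Finset.univ

/-- `vs` is (the vertex list of) a cycle of the graph `E`, whose set of forward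
edges (edges traversed in their graph orientation) is `HE`. -/
def IsCycle {V : Type} [DecidableEq V] (E : Finset (V × V)) (vs : List V)
    (HE : Finset (V × V)) : Prop :=
  2 ≤ vs.length ∧ vs.Nodup ∧ HE ⊆ cyclePairs vs ∧ HE ⊆ E ∧
    ∀ p ∈ cyclePairs vs, p ∉ HE → (p.2, p.1) ∈ E

lemma xv_sub_ne_zero {V : Type} {a b : V} (h : a ≠ b) : xv a - xv b ≠ 0 := by
  have h1 : (MvPolynomial.X a - MvPolynomial.X b : MvPolynomial V ℚ) ≠ 0 :=
    sub_ne_zero.mpr (fun hc => h (MvPolynomial.X_injective hc))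
  have h2 := (map_ne_zero_iff (algebraMap (MvPolynomial V ℚ) (K V))
    (IsFractionRing.injective _ _)).mpr h1
  simpa [xv, map_sub] using h2

lemma psi_single {V : Type} (a : V) : psi [a] = 1 := by simp [psi]

lemma psi_cons {V : Type} (a b : V) (l : List V) :
    psi (a :: b :: l) = (xv a - xv b)⁻¹ * psi (b :: l) := by
  simp [psi, mul_inv, mul_comm]

lemma key_identity {F : Type*} [Field F] {a b c : F}
    (hba : b - a ≠ 0) (hbc : b - c ≠ 0) (hca : c - a ≠ 0) :
    (b - c)⁻¹ * (c - a)⁻¹ + (b - a)⁻¹ * (a - c)⁻¹ = (b - a)⁻¹ * (b - c)⁻¹ := by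
  have hac : a - c ≠ 0 := fun h => hca (by linear_combination -h)
  field_simp
  ring

lemma auxB {V : Type} : ∀ (l : List V) (b c : V), (c :: b :: l).Nodup →
    ((List.permutations'Aux c l).map (fun v => psi (b :: v))).sum
      = psi (b :: l) * (xv b - xv c)⁻¹ := by
  intro l
  induction l with
  | nil =>
      intro b c h
      have hbc : b ≠ c := by simp [List.nodup_cons] at h; tauto
      simp [List.permutations'Aux, psi_cons, psi_single]
  | cons a l ih =>
      intro b c h
      simp only [List.nodup_cons, List.mem_cons] at h
      have hca : c ≠ a := fun hc => h.1 (Or.inr (Or.inl hc))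
      have hba : b ≠ a := fun hc => h.2.1 (Or.inl hc)
      have hbc : c ≠ b := fun hc => h.1 (Or.inl hc)
      have hnodup : (c :: a :: l).Nodup := by
        simp only [List.nodup_cons, List.mem_cons]
        exact ⟨fun hc => h.1 (Or.inr hc), h.2.2⟩
      have IH := ih a c hnodup
      simp only [List.permutations'Aux, List.map_cons, List.map_map, List.sum_cons,
        Function.comp_def]
      have step : ∀ v : List V, psi (b :: a :: v) = (xv b - xv a)⁻¹ * psi (a :: v) :=
        fun v => psi_cons b a v
      simp only [step]
      rw [List.sum_map_mul_left, IH, psi_cons b c (a :: l), psi_cons c a l]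
      have k := key_identity (F := K V) (a := xv a) (b := xv b) (c := xv c)
        (xv_sub_ne_zero hba) (xv_sub_ne_zero hbc.symm) (xv_sub_ne_zero hca)
      linear_combination (psi (a :: l)) * k

lemma auxMain {V : Type} (l : List V) (a c : V) (h : (c :: a :: l).Nodup) :
    ((List.permutations'Aux c (a :: l)).map psi).sum = 0 := by
  simp only [List.permutations'Aux, List.map_cons, List.map_map, List.sum_cons,
    Function.comp_def]
  rw [auxB l a c h, psi_cons c a l]
  have hca : c ≠ a := by simp [List.nodup_cons] at h; tauto
  have : xv c - xv a = -(xv a - xv c) := by ring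
  rw [this, inv_neg]
  ring

/-- the sum of `ψ_w` over all `n!` permutation words of `{1,…,n}`
vanishes for `n ≥ 2`. -/
theorem sum_psi_over_permutations_eq_zero (n : ℕ) (hn : 2 ≤ n) :
    ∑ σ : Equiv.Perm (Fin n), psi ((List.finRange n).map ⇑σ) = 0 := by
  obtain ⟨m, rfl⟩ : ∃ m, n = m + 2 := ⟨n - 2, by omega⟩
  have hA : ∑ σ : Equiv.Perm (Fin (m + 2)), psi ((List.finRange (m + 2)).map ⇑σ)
      = ∑ l ∈ ((List.finRange (m + 2)).permutations').toFinset, psi l := by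
    apply Finset.sum_bij (fun (σ : Equiv.Perm (Fin (m + 2))) _ => (List.finRange (m + 2)).map ⇑σ)
    · intro σ _
      rw [List.mem_toFinset, List.mem_permutations']
      apply List.perm_of_nodup_nodup_toFinset_eq
        ((List.nodup_finRange (m + 2)).map σ.injective) (List.nodup_finRange (m + 2))
      ext x
      simp only [List.mem_toFinset, List.mem_map, List.mem_finRange, true_and]
      exact ⟨fun _ => trivial, fun _ => ⟨σ.symm x, by simp⟩⟩
    · intro σ _ σ' _ heq
      apply Equiv.ext; intro i
      have h1 : (List.map ⇑σ (List.finRange (m + 2)))[(i : ℕ)]'(by simpa using i.isLt) =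
          (List.map ⇑σ' (List.finRange (m + 2)))[(i : ℕ)]'(by simpa using i.isLt) := by
        simp only [heq]
      simpa using h1
    · intro l hl
      rw [List.mem_toFinset, List.mem_permutations'] at hl
      have hlen : l.length = (m + 2) := by simpa using hl.length_eq
      have hnd : l.Nodup := hl.symm.nodup (List.nodup_finRange (m + 2))
      have finj : Function.Injective (fun i : Fin (m + 2) => l.get (Fin.cast hlen.symm i)) := by
        intro i j hij
        have := List.nodup_iff_injective_get.mp hnd hij
        exact Fin.ext (by simpa using congrArg Fin.val this)
      refine ⟨Equiv.ofBijective _ (Finite.injective_iff_bijective.mp finj),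
        Finset.mem_univ _, ?_⟩
      refine List.ext_get (by simp [hlen]) fun i h1 h2 => ?_
      simp [Equiv.ofBijective]
    · intros; rfl
  rw [hA, List.sum_toFinset psi
    ((List.permutations_perm_permutations' _).nodup
      (List.nodup_permutations _ (List.nodup_finRange (m + 2))))]
  have hfr : List.finRange (m + 2) = 0 :: (List.finRange (m + 1)).map Fin.succ :=
    List.finRange_succ (n := m + 1)
  rw [hfr]
  set t : List (Fin (m + 2)) := (List.finRange (m + 1)).map Fin.succ with ht
  have htnd : t.Nodup := (List.nodup_finRange _).map (Fin.succ_injective _)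
  have ht0 : (0 : Fin (m + 2)) ∉ t := by
    simp [ht, Fin.succ_ne_zero, eq_comm]
  have htlen : t.length = m + 1 := by simp [ht]
  show ((List.permutations' ((0 : Fin (m + 2)) :: t)).map psi).sum = 0
  rw [show List.permutations' ((0 : Fin (m + 2)) :: t)
      = (List.permutations' t).flatMap (List.permutations'Aux 0) from rfl]
  rw [List.map_flatMap, List.flatMap_def, List.sum_flatten, List.map_map]
  apply List.sum_eq_zero
  intro x hx
  simp only [List.mem_map, Function.comp] at hx
  obtain ⟨u, hu, rfl⟩ := hx
  rw [List.mem_permutations'] at hu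
  cases u with
  | nil => exact absurd hu.length_eq (by simp [htlen])
  | cons a l =>
      apply auxMain
      rw [List.nodup_cons]
      exact ⟨fun hc => ht0 (hu.mem_iff.mp hc), hu.symm.nodup htnd⟩
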